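/- arXiv:1103.4075 — 2 statements merged into one kernel-verified Lean document; each statement's English description precedes it below -/
import Mathlib

section
/- Let p be a complex number with 0 < |p| < 1. Then Σ_{k∈ℤ} p^{|k|} · [(p^{3+3|k|}, p²; p³)_∞ / (p³, p^{1+3|k|}; p³)_∞] · ₂φ₁(p^{1+3|k|}, p; p^{3+3|k|}; p³, p²) = [(p²;p³)_∞/(p;p³)_∞]³. (With q = p³ this is the equality I_{e,N_f=1} = I_{m,N_f=1} of superconformal indices for the N=2 U(1) theory with one flavour of R-charge 1/3 and its mirror free theory of the meson M and the two singlets V_±.) -/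
open scoped BigOperators

/-- The infinite q-Pochhammer symbol `(z;q)_∞ = ∏_{j=0}^∞ (1 - z q^j)`. -/
noncomputable def qPochInf (z q : ℂ) : ℂ := ∏' j : ℕ, (1 - z * q ^ j)

/-- The q-Pochhammer symbol `(z;q)_n = (z;q)_∞ / (z q^n;q)_∞` for `n : ℤ`. -/
noncomputable def qPochInt (z q : ℂ) (n : ℤ) : ℂ :=
  qPochInf z q / qPochInf (z * q ^ n) q

/-- The basic hypergeometric series `₂φ₁(A,B;C;q,Z)`. -/
noncomputable def phi21 (A B C q Z : ℂ) : ℂ :=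
  ∑' n : ℕ, (qPochInt A q n * qPochInt B q n) /
    (qPochInt q q n * qPochInt C q n) * Z ^ n

lemma normZQ {z q : ℂ} (hz : ‖z‖ < 1) (hq : ‖q‖ < 1) (j : ℕ) : ‖z * q ^ j‖ ≤ ‖z‖ := by
  rw [norm_mul, norm_pow]
  calc ‖z‖ * ‖q‖ ^ j ≤ ‖z‖ * 1 := by
        gcongr
        exact pow_le_one₀ (norm_nonneg q) hq.le
    _ = ‖z‖ := mul_one _

lemma oneSubNe {w : ℂ} (h : ‖w‖ < 1) : 1 - w ≠ 0 := by
  intro h0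
  rw [sub_eq_zero] at h0
  rw [← h0] at h
  simp at h

set_option maxHeartbeats 1000000 in
lemma summableLog {z q : ℂ} (hz : ‖z‖ < 1) (hq : ‖q‖ < 1) :
    Summable (fun j : ℕ => Complex.log (1 - z * q ^ j)) := by
  apply Summable.of_norm
  have h1z : (0:ℝ) < 1 - ‖z‖ := by linarith
  have hi2 : (0:ℝ) ≤ (1 - ‖z‖)⁻¹ := inv_nonneg.mpr h1z.le
  apply Summable.of_nonneg_of_le (fun j => norm_nonneg _)
    (f := fun j => (‖z‖ * (1 - ‖z‖)⁻¹ / 2 + 1) * (‖z‖ * ‖q‖ ^ j))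
  · intro j
    have hle : ‖z * q ^ j‖ ≤ ‖z‖ := normZQ hz hq j
    have hlt : ‖z * q ^ j‖ < 1 := lt_of_le_of_lt hle hz
    have h1 : (1 : ℂ) - z * q ^ j = 1 + (-(z * q ^ j)) := by ring
    rw [h1]
    have hnn : ‖-(z * q ^ j)‖ = ‖z * q ^ j‖ := norm_neg _
    have hb := Complex.norm_log_one_add_le (z := -(z * q ^ j)) (by rw [hnn]; exact hlt)
    rw [hnn] at hb
    refine hb.trans ?_
    have he : ‖z * q ^ j‖ = ‖z‖ * ‖q‖ ^ j := by rw [norm_mul, norm_pow]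
    rw [← he]
    have hinv : (1 - ‖z * q ^ j‖)⁻¹ ≤ (1 - ‖z‖)⁻¹ := by
      apply inv_anti₀ (by linarith) (by linarith)
    have hw0 : (0:ℝ) ≤ ‖z * q ^ j‖ := norm_nonneg _
    have h2 : ‖z * q ^ j‖ ^ 2 * (1 - ‖z * q ^ j‖)⁻¹ ≤ ‖z‖ * ‖z * q ^ j‖ * (1 - ‖z‖)⁻¹ := by
      apply mul_le_mul _ hinv (inv_nonneg.mpr (by linarith)) (by positivity)
      rw [sq]; exact mul_le_mul_of_nonneg_right hle hw0
    nlinarith [h2]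
  · exact ((summable_geometric_of_lt_one (norm_nonneg q) hq).mul_left _).mul_left _

lemma multipliableFactors {z q : ℂ} (hz : ‖z‖ < 1) (hq : ‖q‖ < 1) :
    Multipliable (fun j : ℕ => 1 - z * q ^ j) :=
  Complex.multipliable_of_summable_log (summableLog hz hq)

lemma qPochInfNeZero {z q : ℂ} (hz : ‖z‖ < 1) (hq : ‖q‖ < 1) : qPochInf z q ≠ 0 := by
  have h2 := Complex.cexp_tsum_eq_tprod (f := fun j : ℕ => 1 - z * q ^ j)
    (fun j => oneSubNe (lt_of_le_of_lt (normZQ hz hq j) hz))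
    (summableLog hz hq)
  rw [qPochInf, ← h2]
  exact Complex.exp_ne_zero _

lemma qPochInfShift {z q : ℂ} (hz : ‖z‖ < 1) (hq : ‖q‖ < 1) :
    qPochInf z q = (1 - z) * qPochInf (z * q) q := by
  have hzq : ‖z * q‖ < 1 := by
    calc ‖z * q‖ = ‖z‖ * ‖q‖ := norm_mul _ _
      _ ≤ ‖z‖ * 1 := mul_le_mul_of_nonneg_left hq.le (norm_nonneg z)
      _ < 1 := by rwa [mul_one]
  have h : ∀ j : ℕ, 1 - (z * q) * q ^ j = 1 - z * q ^ (j + 1) := by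
    intro j; rw [pow_succ]; ring
  have hm : Multipliable (fun j : ℕ => 1 - z * q ^ (j + 1)) :=
    (multipliableFactors hzq hq).congr h
  rw [qPochInf, qPochInf, tprod_eq_zero_mul' (f := fun j : ℕ => 1 - z * q ^ j) hm, pow_zero, mul_one]
  congr 1
  exact (tprod_congr h).symm

lemma qPochInfProdShift {z q : ℂ} (hz : ‖z‖ < 1) (hq : ‖q‖ < 1) (m : ℕ) :
    qPochInf z q = (∏ j ∈ Finset.range m, (1 - z * q ^ j)) * qPochInf (z * q ^ m) q := by
  induction m with
  | zero => simp
  | succ m ih =>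
    have hzm : ‖z * q ^ m‖ < 1 := lt_of_le_of_lt (normZQ hz hq m) hz
    rw [ih, qPochInfShift hzm hq, Finset.prod_range_succ]
    rw [mul_assoc, pow_succ, ← mul_assoc z, mul_assoc (∏ x ∈ Finset.range m, (1 - z * q ^ x))]

lemma qPochIntNat {z q : ℂ} (hz : ‖z‖ < 1) (hq : ‖q‖ < 1) (n : ℕ) :
    qPochInt z q (n : ℤ) = ∏ j ∈ Finset.range n, (1 - z * q ^ j) := by
  have hzn : ‖z * q ^ n‖ < 1 := lt_of_le_of_lt (normZQ hz hq n) hz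
  rw [qPochInt, zpow_natCast, qPochInfProdShift hz hq n,
    mul_div_assoc, div_self (qPochInfNeZero hzn hq), mul_one]

/-- coefficients of the q-binomial series with numerator parameter `p`. -/
noncomputable def qcoef (p q : ℂ) (n : ℕ) : ℂ :=
  ∏ j ∈ Finset.range n, ((1 - p * q ^ j) / (1 - q ^ (j + 1)))

lemma qcoef_zero (p q : ℂ) : qcoef p q 0 = 1 := by simp [qcoef]

lemma qcoef_succ (p q : ℂ) (n : ℕ) :
    qcoef p q (n + 1) = qcoef p q n * ((1 - p * q ^ n) / (1 - q ^ (n + 1))) := by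
  rw [qcoef, Finset.prod_range_succ, qcoef]

lemma qcoef_bound {p q : ℂ} (hq : ‖q‖ < 1) (n : ℕ) :
    ‖qcoef p q n‖ ≤ Real.exp (‖p‖ * (1 - ‖q‖)⁻¹ + ‖q‖ * (1 - ‖q‖)⁻¹ * (1 - ‖q‖)⁻¹) := by
  have hq0 : (0:ℝ) ≤ ‖q‖ := norm_nonneg q
  have hq1 : (0:ℝ) < 1 - ‖q‖ := by linarith
  set u : ℕ → ℝ := fun j => ‖p‖ * ‖q‖ ^ j + ‖q‖ ^ (j + 1) * (1 - ‖q‖)⁻¹ with hu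
  have key : ∀ j : ℕ, ‖(1 - p * q ^ j) / (1 - q ^ (j + 1))‖ ≤ Real.exp (u j) := by
    intro j
    have hqj : ‖q‖ ^ (j + 1) ≤ ‖q‖ := by
      calc ‖q‖ ^ (j + 1) = ‖q‖ * ‖q‖ ^ j := by rw [pow_succ, mul_comm]
        _ ≤ ‖q‖ * 1 := mul_le_mul_of_nonneg_left (pow_le_one₀ hq0 hq.le) hq0
        _ = ‖q‖ := mul_one _
    have hx1 : (0:ℝ) < 1 - ‖q‖ ^ (j + 1) := by linarith
    have hnum : ‖(1 : ℂ) - p * q ^ j‖ ≤ Real.exp (‖p‖ * ‖q‖ ^ j) := by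
      calc ‖(1 : ℂ) - p * q ^ j‖ ≤ ‖(1:ℂ)‖ + ‖p * q ^ j‖ := norm_sub_le _ _
        _ = 1 + ‖p‖ * ‖q‖ ^ j := by rw [norm_one, norm_mul, norm_pow]
        _ ≤ Real.exp (‖p‖ * ‖q‖ ^ j) := by
            have := Real.add_one_le_exp (‖p‖ * ‖q‖ ^ j)
            linarith
    have hden : 1 - ‖q‖ ^ (j + 1) ≤ ‖(1 : ℂ) - q ^ (j + 1)‖ := by
      have h := norm_sub_norm_le (1:ℂ) (q ^ (j + 1))
      rw [norm_one, norm_pow] at h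
      linarith
    have hdeninv : (1 - ‖q‖ ^ (j + 1))⁻¹ ≤ Real.exp (‖q‖ ^ (j + 1) * (1 - ‖q‖)⁻¹) := by
      have hne : (1 - ‖q‖ ^ (j + 1)) ≠ 0 := ne_of_gt hx1
      have h1 : (1 - ‖q‖ ^ (j + 1))⁻¹ = 1 + ‖q‖ ^ (j + 1) / (1 - ‖q‖ ^ (j + 1)) := by
        rw [inv_eq_one_div, one_add_div hne]
        congr 1
        ring
      have h2 : ‖q‖ ^ (j + 1) / (1 - ‖q‖ ^ (j + 1)) ≤ ‖q‖ ^ (j + 1) * (1 - ‖q‖)⁻¹ := by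
        rw [div_eq_mul_inv]
        exact mul_le_mul_of_nonneg_left (inv_anti₀ hq1 (by linarith)) (pow_nonneg hq0 _)
      have h3 := Real.add_one_le_exp (‖q‖ ^ (j + 1) * (1 - ‖q‖)⁻¹)
      linarith
    rw [norm_div, hu]
    calc ‖(1:ℂ) - p * q ^ j‖ / ‖(1:ℂ) - q ^ (j + 1)‖
        ≤ Real.exp (‖p‖ * ‖q‖ ^ j) / (1 - ‖q‖ ^ (j + 1)) :=
          div_le_div₀ (Real.exp_pos _).le hnum hx1 hden
      _ = Real.exp (‖p‖ * ‖q‖ ^ j) * (1 - ‖q‖ ^ (j + 1))⁻¹ := div_eq_mul_inv _ _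
      _ ≤ Real.exp (‖p‖ * ‖q‖ ^ j) * Real.exp (‖q‖ ^ (j + 1) * (1 - ‖q‖)⁻¹) :=
          mul_le_mul_of_nonneg_left hdeninv (Real.exp_pos _).le
      _ = Real.exp (‖p‖ * ‖q‖ ^ j + ‖q‖ ^ (j + 1) * (1 - ‖q‖)⁻¹) := (Real.exp_add _ _).symm
  calc ‖qcoef p q n‖ = ∏ j ∈ Finset.range n, ‖(1 - p * q ^ j) / (1 - q ^ (j + 1))‖ := by
        rw [qcoef]; exact norm_prod _ _
    _ ≤ ∏ j ∈ Finset.range n, Real.exp (u j) :=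
        Finset.prod_le_prod (fun j _ => norm_nonneg _) (fun j _ => key j)
    _ = Real.exp (∑ j ∈ Finset.range n, u j) := by rw [Real.exp_sum]
    _ ≤ Real.exp (‖p‖ * (1 - ‖q‖)⁻¹ + ‖q‖ * (1 - ‖q‖)⁻¹ * (1 - ‖q‖)⁻¹) := by
        apply Real.exp_le_exp.mpr
        have hgeom : ∑ j ∈ Finset.range n, ‖q‖ ^ j ≤ (1 - ‖q‖)⁻¹ := by
          have hs : Summable (fun j : ℕ => ‖q‖ ^ j) := summable_geometric_of_lt_one hq0 hq
          have h := Summable.sum_le_tsum (Finset.range n) (fun j _ => pow_nonneg hq0 j) hs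
          rwa [tsum_geometric_of_lt_one hq0 hq] at h
        have hc0 : (0:ℝ) ≤ ‖p‖ + ‖q‖ * (1 - ‖q‖)⁻¹ := by
          have : (0:ℝ) ≤ ‖q‖ * (1 - ‖q‖)⁻¹ := mul_nonneg hq0 (inv_nonneg.mpr hq1.le)
          have := norm_nonneg p
          linarith
        have hu2 : ∀ j : ℕ, u j = (‖p‖ + ‖q‖ * (1 - ‖q‖)⁻¹) * ‖q‖ ^ j := by
          intro j
          rw [hu]
          simp only
          rw [pow_succ]
          ring
        calc ∑ j ∈ Finset.range n, u j
            = (‖p‖ + ‖q‖ * (1 - ‖q‖)⁻¹) * ∑ j ∈ Finset.range n, ‖q‖ ^ j := by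
              rw [Finset.mul_sum]
              exact Finset.sum_congr rfl (fun j _ => hu2 j)
          _ ≤ (‖p‖ + ‖q‖ * (1 - ‖q‖)⁻¹) * (1 - ‖q‖)⁻¹ :=
              mul_le_mul_of_nonneg_left hgeom hc0
          _ = ‖p‖ * (1 - ‖q‖)⁻¹ + ‖q‖ * (1 - ‖q‖)⁻¹ * (1 - ‖q‖)⁻¹ := by ring

noncomputable def qbinF (p q z : ℂ) : ℂ := ∑' n : ℕ, qcoef p q n * z ^ n

lemma qcoef_summable {p q z : ℂ} (hq : ‖q‖ < 1) (hz : ‖z‖ < 1) :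
    Summable (fun n : ℕ => qcoef p q n * z ^ n) := by
  apply Summable.of_norm
  apply Summable.of_nonneg_of_le (fun n => norm_nonneg _)
    (f := fun n => Real.exp (‖p‖ * (1 - ‖q‖)⁻¹ + ‖q‖ * (1 - ‖q‖)⁻¹ * (1 - ‖q‖)⁻¹) * ‖z‖ ^ n)
  · intro n
    rw [norm_mul, norm_pow]
    exact mul_le_mul_of_nonneg_right (qcoef_bound hq n) (pow_nonneg (norm_nonneg z) n)
  · exact (summable_geometric_of_lt_one (norm_nonneg z) hz).mul_left _

lemma qbinF_funEq {p q z : ℂ} (hq : ‖q‖ < 1) (hz : ‖z‖ < 1) :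
    (1 - z) * qbinF p q z = (1 - p * z) * qbinF p q (q * z) := by
  have hqz : ‖q * z‖ < 1 := by
    calc ‖q * z‖ = ‖q‖ * ‖z‖ := norm_mul _ _
      _ ≤ 1 * ‖z‖ := mul_le_mul_of_nonneg_right hq.le (norm_nonneg z)
      _ = ‖z‖ := one_mul _
      _ < 1 := hz
  have s1 : Summable (fun n : ℕ => qcoef p q n * z ^ n) := qcoef_summable hq hz
  have s2 : Summable (fun n : ℕ => qcoef p q n * (q * z) ^ n) := qcoef_summable hq hqz
  have hstep : qbinF p q z - qbinF p q (q * z)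
      = z * qbinF p q z - p * z * qbinF p q (q * z) := by
    have hA : ∑' n : ℕ, (qcoef p q n * z ^ n - qcoef p q n * (q * z) ^ n)
        = qbinF p q z - qbinF p q (q * z) := Summable.tsum_sub s1 s2
    have hS : ∑' n : ℕ, (z * (qcoef p q n * z ^ n) - p * z * (qcoef p q n * (q * z) ^ n))
        = z * qbinF p q z - p * z * qbinF p q (q * z) := by
      rw [Summable.tsum_sub (s1.mul_left z) (s2.mul_left (p * z)), tsum_mul_left, tsum_mul_left,
        qbinF, qbinF]
    rw [← hA, ← hS, Summable.tsum_eq_zero_add (s1.sub s2)]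
    have h0 : qcoef p q 0 * z ^ 0 - qcoef p q 0 * (q * z) ^ 0 = 0 := by
      simp
    rw [h0, zero_add]
    apply tsum_congr
    intro n
    have hqn : (1 : ℂ) - q ^ (n + 1) ≠ 0 := by
      apply oneSubNe
      rw [norm_pow]
      calc ‖q‖ ^ (n + 1) ≤ ‖q‖ ^ 1 :=
            pow_le_pow_of_le_one (norm_nonneg q) hq.le (by omega)
        _ = ‖q‖ := pow_one _
        _ < 1 := hq
    rw [qcoef_succ]
    have hexp : (q * z) ^ (n + 1) = q ^ (n + 1) * z ^ (n + 1) := mul_pow _ _ _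
    have hexp2 : (q * z) ^ n = q ^ n * z ^ n := mul_pow _ _ _
    rw [hexp, hexp2]
    field_simp
    ring
  linear_combination hstep - qbinF p q z + qbinF p q (q * z) +
    (0 : ℂ) * qbinF p q z

lemma qbinF_iter {p q : ℂ} (hp : ‖p‖ < 1) (hq : ‖q‖ < 1) (N : ℕ) :
    (∏ j ∈ Finset.range N, (1 - p * q ^ j)) * qbinF p q p
      = (∏ j ∈ Finset.range N, (1 - p * p * q ^ j)) * qbinF p q (p * q ^ N) := by
  induction N with
  | zero => simp
  | succ N ih =>
    have hzN : ‖p * q ^ N‖ < 1 := lt_of_le_of_lt (normZQ hp hq N) hp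
    have hfe := qbinF_funEq (p := p) hq hzN
    have harg : q * (p * q ^ N) = p * q ^ (N + 1) := by ring
    have harg2 : (1 : ℂ) - p * (p * q ^ N) = 1 - p * p * q ^ N := by ring
    rw [harg, harg2] at hfe
    rw [Finset.prod_range_succ, Finset.prod_range_succ]
    calc (∏ j ∈ Finset.range N, (1 - p * q ^ j)) * (1 - p * q ^ N) * qbinF p q p
        = (1 - p * q ^ N) * ((∏ j ∈ Finset.range N, (1 - p * q ^ j)) * qbinF p q p) := by
          ring
      _ = (1 - p * q ^ N) * ((∏ j ∈ Finset.range N, (1 - p * p * q ^ j))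
            * qbinF p q (p * q ^ N)) := by rw [ih]
      _ = (∏ j ∈ Finset.range N, (1 - p * p * q ^ j))
            * ((1 - p * q ^ N) * qbinF p q (p * q ^ N)) := by ring
      _ = (∏ j ∈ Finset.range N, (1 - p * p * q ^ j))
            * ((1 - p * p * q ^ N) * qbinF p q (p * q ^ (N + 1))) := by rw [hfe]
      _ = (∏ j ∈ Finset.range N, (1 - p * p * q ^ j)) * (1 - p * p * q ^ N)
            * qbinF p q (p * q ^ (N + 1)) := by ring

lemma qbinF_tail_tendsto {p q : ℂ} (hp : ‖p‖ < 1) (hq : ‖q‖ < 1) :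
    Filter.Tendsto (fun N : ℕ => qbinF p q (p * q ^ N)) Filter.atTop (nhds 1) := by
  set K : ℝ := Real.exp (‖p‖ * (1 - ‖q‖)⁻¹ + ‖q‖ * (1 - ‖q‖)⁻¹ * (1 - ‖q‖)⁻¹) with hK
  have hK0 : 0 < K := Real.exp_pos _
  have hp1 : (0:ℝ) < 1 - ‖p‖ := by linarith
  have hbnd : ∀ N : ℕ, ‖qbinF p q (p * q ^ N) - 1‖ ≤ (K * (1 - ‖p‖)⁻¹ * ‖p‖) * ‖q‖ ^ N := by
    intro N
    set w : ℂ := p * q ^ N with hw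
    have hwle : ‖w‖ ≤ ‖p‖ := normZQ hp hq N
    have hwlt : ‖w‖ < 1 := lt_of_le_of_lt hwle hp
    have hs : Summable (fun n : ℕ => qcoef p q n * w ^ n) := qcoef_summable hq hwlt
    have htail : qbinF p q w - 1 = ∑' n : ℕ, qcoef p q (n + 1) * w ^ (n + 1) := by
      rw [qbinF, Summable.tsum_eq_zero_add hs, qcoef_zero, pow_zero, mul_one]
      ring
    rw [htail]
    have hsn : Summable (fun n : ℕ => ‖qcoef p q (n + 1) * w ^ (n + 1)‖) :=
      (summable_nat_add_iff 1).mpr hs.norm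
    calc ‖∑' n : ℕ, qcoef p q (n + 1) * w ^ (n + 1)‖
        ≤ ∑' n : ℕ, ‖qcoef p q (n + 1) * w ^ (n + 1)‖ := norm_tsum_le_tsum_norm hsn
      _ ≤ ∑' n : ℕ, (K * ‖w‖) * ‖w‖ ^ n := by
          apply Summable.tsum_le_tsum _ hsn ((summable_geometric_of_lt_one (norm_nonneg w) hwlt).mul_left _)
          intro n
          rw [norm_mul, norm_pow, pow_succ]
          calc ‖qcoef p q (n + 1)‖ * (‖w‖ ^ n * ‖w‖)
              ≤ K * (‖w‖ ^ n * ‖w‖) := by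
                apply mul_le_mul_of_nonneg_right (qcoef_bound hq (n + 1))
                positivity
            _ = K * ‖w‖ * ‖w‖ ^ n := by ring
      _ = (K * ‖w‖) * (1 - ‖w‖)⁻¹ := by
          rw [tsum_mul_left, tsum_geometric_of_lt_one (norm_nonneg w) hwlt]
      _ ≤ (K * (1 - ‖p‖)⁻¹ * ‖p‖) * ‖q‖ ^ N := by
          have hwe : ‖w‖ = ‖p‖ * ‖q‖ ^ N := by rw [hw, norm_mul, norm_pow]
          have hinv : (1 - ‖w‖)⁻¹ ≤ (1 - ‖p‖)⁻¹ := inv_anti₀ hp1 (by linarith)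
          have h1 : K * ‖w‖ * (1 - ‖w‖)⁻¹ ≤ K * ‖w‖ * (1 - ‖p‖)⁻¹ := by
            apply mul_le_mul_of_nonneg_left hinv
            positivity
          calc K * ‖w‖ * (1 - ‖w‖)⁻¹ ≤ K * ‖w‖ * (1 - ‖p‖)⁻¹ := h1
            _ = (K * (1 - ‖p‖)⁻¹ * ‖p‖) * ‖q‖ ^ N := by rw [hwe]; ring
  have hgeo : Filter.Tendsto (fun N : ℕ => (K * (1 - ‖p‖)⁻¹ * ‖p‖) * ‖q‖ ^ N)
      Filter.atTop (nhds 0) := by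
    have := tendsto_pow_atTop_nhds_zero_of_lt_one (norm_nonneg q) hq
    simpa using this.const_mul (K * (1 - ‖p‖)⁻¹ * ‖p‖)
  have h0 : Filter.Tendsto (fun N : ℕ => qbinF p q (p * q ^ N) - 1) Filter.atTop (nhds 0) :=
    squeeze_zero_norm hbnd hgeo
  have := h0.add_const 1
  simpa using this

lemma qbinF_eval {p q : ℂ} (hp : ‖p‖ < 1) (hq : ‖q‖ < 1) :
    qbinF p q p = qPochInf (p * p) q / qPochInf p q := by
  have hpp : ‖p * p‖ < 1 := by
    calc ‖p * p‖ = ‖p‖ * ‖p‖ := norm_mul _ _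
      _ ≤ 1 * ‖p‖ := mul_le_mul_of_nonneg_right hp.le (norm_nonneg p)
      _ = ‖p‖ := one_mul _
      _ < 1 := hp
  have hT1 : Filter.Tendsto (fun N : ℕ => (∏ j ∈ Finset.range N, (1 - p * q ^ j)) * qbinF p q p)
      Filter.atTop (nhds (qPochInf p q * qbinF p q p)) :=
    ((multipliableFactors hp hq).hasProd.tendsto_prod_nat).mul_const _
  have hT2 : Filter.Tendsto
      (fun N : ℕ => (∏ j ∈ Finset.range N, (1 - p * p * q ^ j)) * qbinF p q (p * q ^ N))
      Filter.atTop (nhds (qPochInf (p * p) q * 1)) :=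
    ((multipliableFactors hpp hq).hasProd.tendsto_prod_nat).mul (qbinF_tail_tendsto hp hq)
  have heq : qPochInf p q * qbinF p q p = qPochInf (p * p) q * 1 := by
    apply tendsto_nhds_unique _ hT2
    apply hT1.congr
    intro N
    exact qbinF_iter hp hq N
  rw [mul_one] at heq
  rw [eq_div_iff (qPochInfNeZero hp hq), mul_comm]
  exact heq

lemma normPowLt {p : ℂ} (hp : ‖p‖ < 1) {k : ℕ} (hk : k ≠ 0) : ‖p ^ k‖ < 1 := by
  rw [norm_pow]
  exact pow_lt_one₀ (norm_nonneg p) hp hk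

lemma prodNe {z q : ℂ} (hz : ‖z‖ < 1) (hq : ‖q‖ < 1) (k : ℕ) :
    (∏ j ∈ Finset.range k, (1 - z * q ^ j)) ≠ 0 :=
  Finset.prod_ne_zero_iff.mpr (fun j _ => oneSubNe (lt_of_le_of_lt (normZQ hz hq j) hz))

lemma termwise {p : ℂ} (hp : ‖p‖ < 1) (m n : ℕ) :
    p ^ m * (qPochInf (p ^ (3 + 3 * m)) (p ^ 3) * qPochInf (p ^ 2) (p ^ 3)) /
      (qPochInf (p ^ 3) (p ^ 3) * qPochInf (p ^ (1 + 3 * m)) (p ^ 3)) *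
      ((qPochInt (p ^ (1 + 3 * m)) (p ^ 3) n * qPochInt p (p ^ 3) n) /
        (qPochInt (p ^ 3) (p ^ 3) n * qPochInt (p ^ (3 + 3 * m)) (p ^ 3) n) * (p ^ 2) ^ n)
    = (qPochInf (p ^ 2) (p ^ 3) / qPochInf p (p ^ 3)) *
        ((qcoef p (p ^ 3) n * p ^ n) * (qcoef p (p ^ 3) (n + m) * p ^ (n + m))) := by
  have hq : ‖p ^ 3‖ < 1 := normPowLt hp (by norm_num)
  have hA : ‖p ^ (1 + 3 * m)‖ < 1 := normPowLt hp (by omega)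
  have hC : ‖p ^ (3 + 3 * m)‖ < 1 := normPowLt hp (by omega)
  rw [qPochIntNat hA hq n, qPochIntNat hp hq n, qPochIntNat hq hq n, qPochIntNat hC hq n]
  have hqc : ∀ k : ℕ, qcoef p (p ^ 3) k
      = (∏ j ∈ Finset.range k, (1 - p * (p ^ 3) ^ j))
        / (∏ j ∈ Finset.range k, (1 - p ^ 3 * (p ^ 3) ^ j)) := by
    intro k
    rw [qcoef, Finset.prod_div_distrib]
    congr 1
    apply Finset.prod_congr rfl
    intro j _
    congr 1
    rw [pow_succ']
  have hPA : (∏ j ∈ Finset.range (n + m), (1 - p * (p ^ 3) ^ j))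
      = (∏ j ∈ Finset.range m, (1 - p * (p ^ 3) ^ j))
        * ∏ j ∈ Finset.range n, (1 - p ^ (1 + 3 * m) * (p ^ 3) ^ j) := by
    rw [Nat.add_comm n m, Finset.prod_range_add]
    congr 1
    apply Finset.prod_congr rfl
    intro j _
    congr 1
    ring
  have hPC : (∏ j ∈ Finset.range (n + m), (1 - p ^ 3 * (p ^ 3) ^ j))
      = (∏ j ∈ Finset.range m, (1 - p ^ 3 * (p ^ 3) ^ j))
        * ∏ j ∈ Finset.range n, (1 - p ^ (3 + 3 * m) * (p ^ 3) ^ j) := by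
    rw [Nat.add_comm n m, Finset.prod_range_add]
    congr 1
    apply Finset.prod_congr rfl
    intro j _
    congr 1
    ring
  have hQA : qPochInf p (p ^ 3) = (∏ j ∈ Finset.range m, (1 - p * (p ^ 3) ^ j))
      * qPochInf (p ^ (1 + 3 * m)) (p ^ 3) := by
    have h := qPochInfProdShift hp hq m
    have harg : p * (p ^ 3) ^ m = p ^ (1 + 3 * m) := by ring
    rw [harg] at h
    exact h
  have hQC : qPochInf (p ^ 3) (p ^ 3) = (∏ j ∈ Finset.range m, (1 - p ^ 3 * (p ^ 3) ^ j))
      * qPochInf (p ^ (3 + 3 * m)) (p ^ 3) := by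
    have h := qPochInfProdShift hq hq m
    have harg : p ^ 3 * (p ^ 3) ^ m = p ^ (3 + 3 * m) := by ring
    rw [harg] at h
    exact h
  have hPAne : (∏ j ∈ Finset.range n, (1 - p ^ (1 + 3 * m) * (p ^ 3) ^ j)) ≠ 0 :=
    prodNe hA hq n
  have hPCne : (∏ j ∈ Finset.range n, (1 - p ^ (3 + 3 * m) * (p ^ 3) ^ j)) ≠ 0 :=
    prodNe hC hq n
  have hQAne : qPochInf (p ^ (1 + 3 * m)) (p ^ 3) ≠ 0 := qPochInfNeZero hA hq
  have hQCne : qPochInf (p ^ (3 + 3 * m)) (p ^ 3) ≠ 0 := qPochInfNeZero hC hq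
  rw [hqc n, hqc (n + m), hQA, hQC, hPA, hPC]
  field_simp [prodNe hp hq n, prodNe hq hq n, prodNe hp hq m, prodNe hq hq m,
    hPAne, hPCne, hQAne, hQCne]
  ring

def intNatEquiv : ℤ × ℕ ≃ ℕ × ℕ where
  toFun x := if 0 ≤ x.1 then (x.2, x.2 + x.1.natAbs) else (x.2 + x.1.natAbs, x.2)
  invFun y := ((y.2 : ℤ) - (y.1 : ℤ), min y.1 y.2)
  left_inv := by
    rintro ⟨k, n⟩
    by_cases hk : 0 ≤ k
    · simp only [hk, if_pos]
      ext
      · simp only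
        omega
      · simp only
        omega
    · simp only [hk, if_neg, not_false_iff]
      ext
      · simp only
        omega
      · simp only
        omega
  right_inv := by
    rintro ⟨a, b⟩
    by_cases hab : (a : ℤ) ≤ b
    · have h : (0 : ℤ) ≤ (b : ℤ) - (a : ℤ) := by omega
      simp only [h, if_pos]
      ext
      · simp only
        omega
      · simp only
        omega
    · have h : ¬ (0 : ℤ) ≤ (b : ℤ) - (a : ℤ) := by omega
      simp only [h, if_neg, not_false_iff]
      ext
      · simp only
        omega
      · simp only
        omega

noncomputable def gfun (p : ℂ) (n : ℕ) : ℂ := qcoef p (p ^ 3) n * p ^ n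

lemma gfun_norm_summable {p : ℂ} (hp : ‖p‖ < 1) : Summable (fun n : ℕ => ‖gfun p n‖) := by
  have hq : ‖p ^ 3‖ < 1 := normPowLt hp (by norm_num)
  apply Summable.of_nonneg_of_le (fun n => norm_nonneg _)
    (f := fun n => Real.exp (‖p‖ * (1 - ‖p ^ 3‖)⁻¹
      + ‖p ^ 3‖ * (1 - ‖p ^ 3‖)⁻¹ * (1 - ‖p ^ 3‖)⁻¹) * ‖p‖ ^ n)
  · intro n
    rw [gfun, norm_mul, norm_pow]
    exact mul_le_mul_of_nonneg_right (qcoef_bound hq n) (pow_nonneg (norm_nonneg p) n)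
  · exact (summable_geometric_of_lt_one (norm_nonneg p) hp).mul_left _

lemma gfun_tsum {p : ℂ} (hp : ‖p‖ < 1) :
    ∑' n : ℕ, gfun p n = qPochInf (p ^ 2) (p ^ 3) / qPochInf p (p ^ 3) := by
  have hq : ‖p ^ 3‖ < 1 := normPowLt hp (by norm_num)
  have h := qbinF_eval hp hq
  have h2 : p * p = p ^ 2 := (sq p).symm
  rw [h2] at h
  exact h

lemma term_k {p : ℂ} (hp : ‖p‖ < 1) (k : ℤ) :
    p ^ |k| * (qPochInf (p ^ (3 + 3 * |k|)) (p ^ 3) * qPochInf (p ^ 2) (p ^ 3)) /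
      (qPochInf (p ^ 3) (p ^ 3) * qPochInf (p ^ (1 + 3 * |k|)) (p ^ 3)) *
      phi21 (p ^ (1 + 3 * |k|)) p (p ^ (3 + 3 * |k|)) (p ^ 3) (p ^ 2)
    = ∑' n : ℕ, (qPochInf (p ^ 2) (p ^ 3) / qPochInf p (p ^ 3)) *
        (gfun p n * gfun p (n + k.natAbs)) := by
  have e1 : p ^ |k| = p ^ k.natAbs := by
    rw [Int.abs_eq_natAbs, zpow_natCast]
  have e2 : p ^ (3 + 3 * |k|) = p ^ (3 + 3 * k.natAbs) := by
    rw [← zpow_natCast]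
    congr 1
    rw [Int.abs_eq_natAbs]
    push_cast
    ring
  have e3 : p ^ (1 + 3 * |k|) = p ^ (1 + 3 * k.natAbs) := by
    rw [← zpow_natCast]
    congr 1
    rw [Int.abs_eq_natAbs]
    push_cast
    ring
  rw [e1, e2, e3, phi21, ← tsum_mul_left]
  apply tsum_congr
  intro n
  rw [termwise hp k.natAbs n, gfun, gfun]


theorem sci_mirror_Nf1 (p : ℂ) (hp0 : 0 < ‖p‖) (hp1 : ‖p‖ < 1) :
    (∑' k : ℤ, p ^ |k| *
      (qPochInf (p ^ (3 + 3 * |k|)) (p ^ 3) * qPochInf (p ^ 2) (p ^ 3)) /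
      (qPochInf (p ^ 3) (p ^ 3) * qPochInf (p ^ (1 + 3 * |k|)) (p ^ 3)) *
      phi21 (p ^ (1 + 3 * |k|)) p (p ^ (3 + 3 * |k|)) (p ^ 3) (p ^ 2))
    = (qPochInf (p ^ 2) (p ^ 3) / qPochInf p (p ^ 3)) ^ 3 := by
  have hp : ‖p‖ < 1 := by exact hp1
  have hg : Summable (fun n : ℕ => ‖gfun p n‖) := gfun_norm_summable hp
  set C : ℂ := qPochInf (p ^ 2) (p ^ 3) / qPochInf p (p ^ 3) with hC
  have hFG : Summable (fun y : ℕ × ℕ => gfun p y.1 * gfun p y.2) :=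
    summable_mul_of_summable_norm hg hg
  have hCFG : Summable (fun y : ℕ × ℕ => C * (gfun p y.1 * gfun p y.2)) := hFG.mul_left C
  have hcomp : ∀ x : ℤ × ℕ, C * (gfun p x.2 * gfun p (x.2 + x.1.natAbs))
      = (fun y : ℕ × ℕ => C * (gfun p y.1 * gfun p y.2)) (intNatEquiv x) := by
    rintro ⟨k, n⟩
    by_cases hk : 0 ≤ k
    · simp only [intNatEquiv, Equiv.coe_fn_mk, hk, if_pos]
    · simp only [intNatEquiv, Equiv.coe_fn_mk, hk, if_neg, not_false_iff]
      ring
  have hT : Summable (fun x : ℤ × ℕ => C * (gfun p x.2 * gfun p (x.2 + x.1.natAbs))) := by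
    apply Summable.congr (intNatEquiv.summable_iff.mpr hCFG)
    intro x
    exact (hcomp x).symm
  calc (∑' k : ℤ, p ^ |k| *
      (qPochInf (p ^ (3 + 3 * |k|)) (p ^ 3) * qPochInf (p ^ 2) (p ^ 3)) /
      (qPochInf (p ^ 3) (p ^ 3) * qPochInf (p ^ (1 + 3 * |k|)) (p ^ 3)) *
      phi21 (p ^ (1 + 3 * |k|)) p (p ^ (3 + 3 * |k|)) (p ^ 3) (p ^ 2))
      = ∑' k : ℤ, ∑' n : ℕ, C * (gfun p n * gfun p (n + k.natAbs)) :=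
        tsum_congr (fun k => term_k hp k)
    _ = ∑' x : ℤ × ℕ, C * (gfun p x.2 * gfun p (x.2 + x.1.natAbs)) :=
        (Summable.tsum_prod' hT hT.prod_factor).symm
    _ = ∑' y : ℕ × ℕ, C * (gfun p y.1 * gfun p y.2) := by
        rw [← intNatEquiv.tsum_eq (fun y : ℕ × ℕ => C * (gfun p y.1 * gfun p y.2))]
        exact tsum_congr hcomp
    _ = C * ∑' y : ℕ × ℕ, gfun p y.1 * gfun p y.2 := tsum_mul_left
    _ = C * ((∑' n : ℕ, gfun p n) * (∑' n : ℕ, gfun p n)) := by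
        rw [tsum_mul_tsum_of_summable_norm hg hg]
    _ = C ^ 3 := by rw [gfun_tsum hp, ← hC]; ring
end

section
/- Let q and b be complex numbers with 0 < |q| < 1, |b| < 1 and |q| < |b|². Then Σ_{n=0}^∞ b^{2n} · [(q/b²;q)_n² (b²;q)_∞ / ((q;q)_n² (q/b²;q)_∞)] · ₁ψ₁(q^{1+n}/b²; q^{1+n}; q, b) = [(b²;q)_∞/(q/b²;q)_∞] · [(q/b;q)_∞/(b;q)_∞]². (This is the evaluation, via Ramanujan's ₁ψ₁ summation and the q-binomial theorem, of the bilateral double sum obtained from the N_f = 1 superconformal index after interchanging the two summations, with a = b².) -/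
open scoped BigOperators

/-- The bilateral basic hypergeometric series `₁ψ₁(A;B;q,Z)`. -/
noncomputable def psi11 (A B q Z : ℂ) : ℂ :=
  ∑' m : ℤ, qPochInt A q m / qPochInt B q m * Z ^ m


open Filter Topology Finset


lemma fac_ne {q z : ℂ} (hq : ‖q‖ ≤ 1) (hz : ‖z‖ < 1) (j : ℕ) : 1 - z * q ^ j ≠ 0 := by
  intro h
  have h1 : z * q ^ j = 1 := by linear_combination -h
  have : ‖z * q ^ j‖ < 1 := by
    calc ‖z * q ^ j‖ = ‖z‖ * ‖q‖ ^ j := by simp [norm_mul, norm_pow]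
    _ ≤ ‖z‖ * 1 := by
        exact mul_le_mul_of_nonneg_left (pow_le_one₀ (norm_nonneg q) hq) (norm_nonneg z)
    _ < 1 := by simpa using hz
  rw [h1] at this; simp at this

lemma logSummable {q z : ℂ} (hq : ‖q‖ < 1) :
    Summable (fun j : ℕ => Complex.log (1 - z * q ^ j)) := by
  have h0 : Tendsto (fun n : ℕ => ‖z‖ * ‖q‖ ^ n) atTop (𝓝 0) := by
    simpa using (tendsto_pow_atTop_nhds_zero_of_norm_lt_one (x := ‖q‖) (by simpa using hq)).const_mul ‖z‖
  obtain ⟨N, hN⟩ := (Metric.tendsto_atTop.mp h0 (1/2) (by norm_num))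
  rw [← summable_nat_add_iff N]
  have hb : ∀ n : ℕ, ‖Complex.log (1 - z * q ^ (n + N))‖ ≤ 3/2 * (‖z‖ * ‖q‖ ^ N) * ‖q‖ ^ n := by
    intro n
    have hsmall : ‖-(z * q ^ (n + N))‖ ≤ 1/2 := by
      have := hN (n + N) (by omega)
      rw [Real.dist_eq] at this
      have h2 : ‖z‖ * ‖q‖ ^ (n + N) ≤ 1/2 := by
        have hnn : 0 ≤ ‖z‖ * ‖q‖ ^ (n + N) := by positivity
        rw [abs_of_nonneg (by simpa using hnn)] at this
        linarith [this]
      simpa [norm_mul, norm_pow] using h2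
    have := Complex.norm_log_one_add_half_le_self hsmall
    have he : (1 : ℂ) + -(z * q ^ (n + N)) = 1 - z * q ^ (n + N) := by ring
    rw [he] at this
    calc ‖Complex.log (1 - z * q ^ (n + N))‖ ≤ 3/2 * ‖-(z * q ^ (n + N))‖ := this
    _ = 3/2 * (‖z‖ * ‖q‖ ^ N) * ‖q‖ ^ n := by
        simp [norm_mul, norm_pow, pow_add]; ring
  exact Summable.of_norm_bounded (((summable_geometric_of_lt_one (norm_nonneg q) hq)).mul_left _) hb

lemma qPochInf_eq_exp {q z : ℂ} (hq : ‖q‖ < 1) (hz : ∀ j : ℕ, 1 - z * q ^ j ≠ 0) :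
    qPochInf z q = Complex.exp (∑' j : ℕ, Complex.log (1 - z * q ^ j)) := by
  have := Complex.cexp_tsum_eq_tprod (f := fun j => 1 - z * q ^ j)
    hz (logSummable hq)
  exact this.symm

lemma qPochInf_ne_zero {q z : ℂ} (hq : ‖q‖ < 1) (hz : ∀ j : ℕ, 1 - z * q ^ j ≠ 0) :
    qPochInf z q ≠ 0 := by
  rw [qPochInf_eq_exp hq hz]; exact Complex.exp_ne_zero _

lemma multipliable_qPoch {q z : ℂ} (hq : ‖q‖ < 1) (hz : ∀ j : ℕ, 1 - z * q ^ j ≠ 0) :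
    Multipliable (fun j : ℕ => 1 - z * q ^ j) :=
  Complex.multipliable_of_summable_log (logSummable hq)

lemma tendsto_fp {q z : ℂ} (hq : ‖q‖ < 1) (hz : ∀ j : ℕ, 1 - z * q ^ j ≠ 0) :
    Tendsto (fun N : ℕ => ∏ j ∈ range N, (1 - z * q ^ j)) atTop (𝓝 (qPochInf z q)) :=
  (multipliable_qPoch hq hz).hasProd.tendsto_prod_nat

lemma qPochInf_split {q z : ℂ} (hq : ‖q‖ < 1) (hz : ∀ j : ℕ, 1 - z * q ^ j ≠ 0) (n : ℕ) :
    qPochInf z q = (∏ j ∈ range n, (1 - z * q ^ j)) * qPochInf (z * q ^ n) q := by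
  have hz' : ∀ j : ℕ, 1 - (z * q ^ n) * q ^ j ≠ 0 := by
    intro j
    have := hz (n + j)
    rw [pow_add] at this
    simpa [mul_assoc] using this
  have h1 : Tendsto (fun N : ℕ => ∏ j ∈ range (N + n), (1 - z * q ^ j)) atTop
      (𝓝 (qPochInf z q)) := by
    exact (tendsto_fp hq hz).comp (tendsto_add_atTop_nat n)
  have h2 : Tendsto (fun N : ℕ => ∏ j ∈ range (N + n), (1 - z * q ^ j)) atTop
      (𝓝 ((∏ j ∈ range n, (1 - z * q ^ j)) * qPochInf (z * q ^ n) q)) := by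
    have := (tendsto_fp hq hz').const_mul (∏ j ∈ range n, (1 - z * q ^ j))
    apply this.congr
    intro N
    rw [add_comm N n, Finset.prod_range_add]
    congr 1
    apply Finset.prod_congr rfl
    intro i _
    rw [pow_add]; ring
  exact tendsto_nhds_unique h1 h2

lemma qPochInt_eq_fp {q z : ℂ} (hq : ‖q‖ < 1) (hz : ∀ j : ℕ, 1 - z * q ^ j ≠ 0) (n : ℕ) :
    qPochInt z q (n : ℤ) = ∏ j ∈ range n, (1 - z * q ^ j) := by
  have hz' : ∀ j : ℕ, 1 - (z * q ^ n) * q ^ j ≠ 0 := by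
    intro j
    have := hz (n + j)
    rw [pow_add] at this
    simpa [mul_assoc] using this
  rw [qPochInt, zpow_natCast, qPochInf_split hq hz n,
    mul_div_assoc, div_self (qPochInf_ne_zero hq hz'), mul_one]

lemma tprod_eq_zero {f : ℕ → ℂ} (i₀ : ℕ) (h : f i₀ = 0) : ∏' i, f i = 0 := by
  have : HasProd f 0 := by
    have hev : ∀ᶠ s in atTop, ∏ i ∈ s, f i = (0 : ℂ) := by
      filter_upwards [Filter.eventually_ge_atTop ({i₀} : Finset ℕ)] with s hs
      exact Finset.prod_eq_zero (hs (Finset.mem_singleton_self i₀)) h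
    exact Tendsto.congr' (Filter.EventuallyEq.symm hev) tendsto_const_nhds
  exact this.tprod_eq

noncomputable def fp (q z : ℂ) (k : ℕ) : ℂ := ∏ j ∈ Finset.range k, (1 - z * q ^ j)
noncomputable def qc (q b : ℂ) (k : ℕ) : ℂ := fp q (q / b ^ 2) k / fp q q k

structure H (q b : ℂ) : Prop where
  hq1 : ‖q‖ < 1
  hb1 : ‖b‖ < 1
  hqb : ‖q‖ < ‖b‖ ^ 2
  hb0 : b ≠ 0

namespace H
variable {q b : ℂ}

lemma nb0 (h : H q b) : (0:ℝ) < ‖b‖ := norm_pos_iff.mpr h.hb0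
lemma nqb2 (h : H q b) : ‖q / b ^ 2‖ < 1 := by
  rw [norm_div, norm_pow, div_lt_one (by have := h.nb0; positivity)]
  exact h.hqb
lemma nqb (h : H q b) : ‖q / b‖ < 1 := by
  rw [norm_div, div_lt_one h.nb0]
  calc ‖q‖ < ‖b‖ ^ 2 := h.hqb
  _ ≤ ‖b‖ := by nlinarith [h.nb0, h.hb1]
lemma nb2 (h : H q b) : ‖b ^ 2‖ < 1 := by
  rw [norm_pow]; nlinarith [h.nb0, h.hb1]
lemma facA (h : H q b) (z : ℂ) (hz : ‖z‖ < 1) (j : ℕ) : 1 - z * q ^ j ≠ 0 :=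
  fac_ne h.hq1.le hz j
lemma fp_ne (h : H q b) (z : ℂ) (hz : ‖z‖ < 1) (k : ℕ) : fp q z k ≠ 0 :=
  Finset.prod_ne_zero_iff.mpr (fun j _ => h.facA z hz j)
lemma qc_zero : qc q b 0 = 1 := by simp [qc, fp]
lemma qc_ne (h : H q b) (k : ℕ) : qc q b k ≠ 0 :=
  div_ne_zero (h.fp_ne _ h.nqb2 k) (h.fp_ne _ h.hq1 k)

lemma qc_succ (h : H q b) (k : ℕ) :
    qc q b (k+1) = qc q b k * ((1 - (q / b ^ 2) * q ^ k) / (1 - q * q ^ k)) := by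
  have h1 : fp q (q / b ^ 2) (k+1) = fp q (q / b ^ 2) k * (1 - (q / b ^ 2) * q ^ k) :=
    Finset.prod_range_succ _ k
  have h2 : fp q q (k+1) = fp q q k * (1 - q * q ^ k) := Finset.prod_range_succ _ k
  have hQ : fp q q k ≠ 0 := h.fp_ne _ h.hq1 k
  have hq' : (1 - q * q ^ k) ≠ 0 := h.facA q h.hq1 k
  rw [qc, qc, h1, h2]
  field_simp

lemma qc_rec (h : H q b) (k : ℕ) :
    qc q b (k+1) * (1 - q * q ^ k) = qc q b k * (1 - (q / b ^ 2) * q ^ k) := by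
  have hq' : (1 - q * q ^ k) ≠ 0 := h.facA q h.hq1 k
  rw [h.qc_succ k]
  field_simp

lemma summable_norm (h : H q b) : Summable (fun k : ℕ => ‖qc q b k‖ * ‖b‖ ^ k) := by
  apply summable_of_ratio_test_tendsto_lt_one h.hb1
  · filter_upwards with k
    exact mul_ne_zero (norm_ne_zero_iff.mpr (h.qc_ne k)) (pow_ne_zero _ (ne_of_gt h.nb0))
  · have hq0 : Tendsto (fun k : ℕ => q * q ^ k) atTop (𝓝 0) := by
      simpa using (tendsto_pow_atTop_nhds_zero_of_norm_lt_one h.hq1).const_mul q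
    have ha0 : Tendsto (fun k : ℕ => (q / b ^ 2) * q ^ k) atTop (𝓝 0) := by
      simpa using (tendsto_pow_atTop_nhds_zero_of_norm_lt_one h.hq1).const_mul (q / b ^ 2)
    have hnum : Tendsto (fun k : ℕ => ‖1 - (q / b ^ 2) * q ^ k‖) atTop (𝓝 1) := by
      have : Tendsto (fun k : ℕ => (1:ℂ) - (q / b ^ 2) * q ^ k) atTop (𝓝 1) := by
        simpa using (tendsto_const_nhds (x := (1:ℂ))).sub ha0
      simpa using this.norm
    have hden : Tendsto (fun k : ℕ => ‖1 - q * q ^ k‖) atTop (𝓝 1) := by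
      have : Tendsto (fun k : ℕ => (1:ℂ) - q * q ^ k) atTop (𝓝 1) := by
        simpa using (tendsto_const_nhds (x := (1:ℂ))).sub hq0
      simpa using this.norm
    have hrat : Tendsto (fun k : ℕ => ‖b‖ * (‖1 - (q / b ^ 2) * q ^ k‖ / ‖1 - q * q ^ k‖))
        atTop (𝓝 ‖b‖) := by
      simpa using ((hnum.div hden (by norm_num)).const_mul ‖b‖)
    apply hrat.congr
    intro k
    have hqcne : qc q b k ≠ 0 := h.qc_ne k
    have hqck : ‖qc q b (k+1)‖ = ‖qc q b k‖ * (‖1 - (q / b ^ 2) * q ^ k‖ / ‖1 - q * q ^ k‖) := by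
      rw [h.qc_succ k, norm_mul, norm_div]
    rw [Real.norm_eq_abs, Real.norm_eq_abs,
      abs_of_nonneg (by positivity), abs_of_nonneg (by positivity), hqck]
    have hbne : (‖b‖:ℝ) ≠ 0 := ne_of_gt h.nb0
    have hqcn : (‖qc q b k‖:ℝ) ≠ 0 := norm_ne_zero_iff.mpr hqcne
    have hbk : (‖b‖:ℝ) ^ k ≠ 0 := pow_ne_zero _ hbne
    rw [eq_div_iff (mul_ne_zero hqcn hbk)]
    ring

lemma summable_w (h : H q b) {w : ℂ} (hw : ‖w‖ ≤ ‖b‖) :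
    Summable (fun k : ℕ => qc q b k * w ^ k) := by
  apply Summable.of_norm_bounded h.summable_norm
  intro k
  rw [norm_mul, norm_pow]
  exact mul_le_mul_of_nonneg_left (pow_le_pow_left₀ (norm_nonneg w) hw k) (norm_nonneg _)

end H

noncomputable def F (q b w : ℂ) : ℂ := ∑' k : ℕ, qc q b k * w ^ k

set_option maxHeartbeats 1000000 in
lemma H.FE {q b : ℂ} (h : H q b) {w : ℂ} (hw : ‖w‖ ≤ ‖b‖) :
    (1 - w) * F q b w = (1 - (q / b ^ 2) * w) * F q b (q * w) := by
  have hqw : ‖q * w‖ ≤ ‖b‖ := by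
    rw [norm_mul]
    calc ‖q‖ * ‖w‖ ≤ 1 * ‖b‖ :=
      mul_le_mul h.hq1.le hw (norm_nonneg w) zero_le_one
    _ = ‖b‖ := one_mul _
  have hs := h.summable_w hw
  have hs' := h.summable_w hqw
  have hsh : Summable (fun k : ℕ => qc q b (k+1) * w ^ (k+1)) :=
    (summable_nat_add_iff (f := fun k : ℕ => qc q b k * w ^ k) 1).mpr hs
  have hsh' : Summable (fun k : ℕ => qc q b (k+1) * (q*w) ^ (k+1)) :=
    (summable_nat_add_iff (f := fun k : ℕ => qc q b k * (q*w) ^ k) 1).mpr hs'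
  have hsw : Summable (fun k : ℕ => qc q b k * w ^ (k+1)) := by
    apply (hs.mul_left w).congr; intro k; ring
  have hsw' : Summable (fun k : ℕ => (q / b ^ 2) * w * (qc q b k * (q*w) ^ k)) :=
    hs'.mul_left _
  have e1 : F q b w = 1 + ∑' k : ℕ, qc q b (k+1) * w ^ (k+1) := by
    rw [F, Summable.tsum_eq_zero_add hs]; norm_num [qc_zero]
  have e2 : F q b (q*w) = 1 + ∑' k : ℕ, qc q b (k+1) * (q*w) ^ (k+1) := by
    rw [F, Summable.tsum_eq_zero_add hs']; norm_num [qc_zero]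
  have e3 : w * F q b w = ∑' k : ℕ, qc q b k * w ^ (k+1) := by
    rw [F, ← tsum_mul_left]; apply tsum_congr; intro k; ring
  have e4 : ((q / b ^ 2) * w) * F q b (q*w)
      = ∑' k : ℕ, (q / b ^ 2) * w * (qc q b k * (q*w) ^ k) := by
    rw [F, ← tsum_mul_left]
  have lhs : (1 - w) * F q b w
      = 1 + ∑' k : ℕ, (qc q b (k+1) * w ^ (k+1) - qc q b k * w ^ (k+1)) := by
    rw [sub_mul, one_mul, e3, e1, Summable.tsum_sub hsh hsw]; ring
  have rhs : (1 - (q / b ^ 2) * w) * F q b (q*w)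
      = 1 + ∑' k : ℕ, (qc q b (k+1) * (q*w) ^ (k+1)
          - (q / b ^ 2) * w * (qc q b k * (q*w) ^ k)) := by
    rw [sub_mul, one_mul, e4, e2, Summable.tsum_sub hsh' hsw']; ring
  rw [lhs, rhs]
  congr 1
  apply tsum_congr
  intro k
  linear_combination (w ^ (k+1)) * h.qc_rec k

namespace H
variable {q b : ℂ}

lemma Fb_prod (h : H q b) (N : ℕ) :
    F q b b * fp q b N = fp q ((q / b ^ 2) * b) N * F q b (q ^ N * b) := by
  induction N with
  | zero => simp [fp]
  | succ N ih =>
    have hw : ‖q ^ N * b‖ ≤ ‖b‖ := by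
      rw [norm_mul, norm_pow]
      calc ‖q‖ ^ N * ‖b‖ ≤ 1 * ‖b‖ :=
        mul_le_mul_of_nonneg_right (pow_le_one₀ (norm_nonneg q) h.hq1.le) (norm_nonneg b)
      _ = ‖b‖ := one_mul _
    have hFE := h.FE hw
    have e : q * (q ^ N * b) = q ^ (N+1) * b := by ring
    rw [e] at hFE
    rw [fp, fp, Finset.prod_range_succ, Finset.prod_range_succ, ← fp, ← fp, ← mul_assoc, ih]
    calc fp q ((q / b ^ 2) * b) N * F q b (q ^ N * b) * (1 - b * q ^ N)
        = fp q ((q / b ^ 2) * b) N * ((1 - q ^ N * b) * F q b (q ^ N * b)) := by ring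
      _ = fp q ((q / b ^ 2) * b) N
            * ((1 - (q / b ^ 2) * (q ^ N * b)) * F q b (q ^ (N+1) * b)) := by rw [hFE]
      _ = fp q ((q / b ^ 2) * b) N * (1 - (q / b ^ 2) * b * q ^ N) * F q b (q ^ (N+1) * b) := by
          ring

lemma tendsto_F_one (h : H q b) :
    Tendsto (fun N : ℕ => F q b (q ^ N * b)) atTop (𝓝 1) := by
  have hsn : Summable (fun k : ℕ => ‖qc q b (k+1)‖ * ‖b‖ ^ (k+1)) :=
    (summable_nat_add_iff (f := fun k : ℕ => ‖qc q b k‖ * ‖b‖ ^ k) 1).mpr h.summable_norm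
  set E := ∑' k : ℕ, ‖qc q b (k+1)‖ * ‖b‖ ^ (k+1) with hE
  have key : ∀ N : ℕ, ‖F q b (q ^ N * b) - 1‖ ≤ ‖q‖ ^ N * E := by
    intro N
    have hw : ‖q ^ N * b‖ ≤ ‖b‖ := by
      rw [norm_mul, norm_pow]
      calc ‖q‖ ^ N * ‖b‖ ≤ 1 * ‖b‖ :=
        mul_le_mul_of_nonneg_right (pow_le_one₀ (norm_nonneg q) h.hq1.le) (norm_nonneg b)
      _ = ‖b‖ := one_mul _
    have hs := h.summable_w hw
    have e1 : F q b (q ^ N * b) - 1 = ∑' k : ℕ, qc q b (k+1) * (q ^ N * b) ^ (k+1) := by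
      rw [F, Summable.tsum_eq_zero_add hs]; norm_num [qc_zero]
    have hbound : ∀ k : ℕ, ‖qc q b (k+1) * (q ^ N * b) ^ (k+1)‖
        ≤ ‖q‖ ^ N * (‖qc q b (k+1)‖ * ‖b‖ ^ (k+1)) := by
      intro k
      rw [norm_mul, norm_pow, norm_mul, norm_pow, mul_pow]
      have h1 : (‖q‖ ^ N) ^ (k+1) ≤ ‖q‖ ^ N :=
        pow_le_of_le_one (by positivity) (pow_le_one₀ (norm_nonneg q) h.hq1.le)
          (Nat.succ_ne_zero k)
      calc ‖qc q b (k+1)‖ * ((‖q‖ ^ N) ^ (k+1) * ‖b‖ ^ (k+1))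
          ≤ ‖qc q b (k+1)‖ * (‖q‖ ^ N * ‖b‖ ^ (k+1)) := by
            apply mul_le_mul_of_nonneg_left _ (norm_nonneg _)
            exact mul_le_mul_of_nonneg_right h1 (by positivity)
        _ = ‖q‖ ^ N * (‖qc q b (k+1)‖ * ‖b‖ ^ (k+1)) := by ring
    have hsnorm : Summable (fun k : ℕ => ‖qc q b (k+1) * (q ^ N * b) ^ (k+1)‖) := by
      apply Summable.of_nonneg_of_le (fun k => norm_nonneg _) hbound
      exact hsn.mul_left _
    rw [e1]
    calc ‖∑' k : ℕ, qc q b (k+1) * (q ^ N * b) ^ (k+1)‖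
        ≤ ∑' k : ℕ, ‖qc q b (k+1) * (q ^ N * b) ^ (k+1)‖ := norm_tsum_le_tsum_norm hsnorm
      _ ≤ ∑' k : ℕ, ‖q‖ ^ N * (‖qc q b (k+1)‖ * ‖b‖ ^ (k+1)) :=
          Summable.tsum_le_tsum hbound hsnorm (hsn.mul_left _)
      _ = ‖q‖ ^ N * E := by rw [tsum_mul_left]
  have hg : Tendsto (fun N : ℕ => ‖q‖ ^ N * E) atTop (𝓝 0) := by
    have h2 : Tendsto (fun N : ℕ => ‖q‖ ^ N) atTop (𝓝 0) := by
      apply tendsto_pow_atTop_nhds_zero_of_norm_lt_one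
      rw [Real.norm_eq_abs, abs_of_nonneg (norm_nonneg q)]
      exact h.hq1
    simpa using h2.mul_const E
  have h0 : Tendsto (fun N : ℕ => F q b (q ^ N * b) - 1) atTop (𝓝 0) :=
    squeeze_zero_norm key hg
  have := h0.add (tendsto_const_nhds (x := (1:ℂ)))
  simpa using this

lemma qbinom (h : H q b) : F q b b = qPochInf (q / b) q / qPochInf b q := by
  have hb0 : b ≠ 0 := h.hb0
  have hab : (q / b ^ 2) * b = q / b := by
    field_simp
  have hzb : ∀ j : ℕ, 1 - b * q ^ j ≠ 0 := h.facA b h.hb1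
  have hzab : ∀ j : ℕ, 1 - (q / b) * q ^ j ≠ 0 := h.facA _ h.nqb
  have h1 : Tendsto (fun N : ℕ => F q b b * fp q b N) atTop
      (𝓝 (F q b b * qPochInf b q)) := (tendsto_fp h.hq1 hzb).const_mul _
  have h2 : Tendsto (fun N : ℕ => fp q ((q / b ^ 2) * b) N * F q b (q ^ N * b)) atTop
      (𝓝 (qPochInf (q / b) q * 1)) := by
    have := (tendsto_fp h.hq1 hzab).mul h.tendsto_F_one
    apply this.congr
    intro N
    rw [fp, hab]
  have heq := tendsto_nhds_unique (h1.congr (fun N => h.Fb_prod N)) h2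
  have hPb := qPochInf_ne_zero h.hq1 hzb
  rw [mul_one] at heq
  field_simp
  exact heq

end H


namespace H
variable {q b : ℂ}

lemma nscale (h : H q b) (z : ℂ) (hz : ‖z‖ < 1) (k : ℕ) : ‖z * q ^ k‖ < 1 := by
  calc ‖z * q ^ k‖ = ‖z‖ * ‖q‖ ^ k := by simp
  _ ≤ ‖z‖ * 1 := mul_le_mul_of_nonneg_left (pow_le_one₀ (norm_nonneg q) h.hq1.le) (norm_nonneg z)
  _ < 1 := by simpa using hz

lemma en (hq0 : q ≠ 0) (n : ℕ) : q ^ (1 + (n:ℤ)) = q * q ^ n := by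
  rw [show (1 + (n:ℤ)) = ((n+1 : ℕ) : ℤ) by push_cast; ring, zpow_natCast, pow_succ]
  ring

lemma qc_eq_poch (h : H q b) (j : ℕ) :
    qc q b j = qPochInf (q / b ^ 2) q * qPochInf (q * q ^ j) q
      / (qPochInf ((q / b ^ 2) * q ^ j) q * qPochInf q q) := by
  have hPAj : qPochInf ((q / b ^ 2) * q ^ j) q ≠ 0 :=
    qPochInf_ne_zero h.hq1 (h.facA _ (h.nscale _ h.nqb2 j))
  have hPBj : qPochInf (q * q ^ j) q ≠ 0 :=
    qPochInf_ne_zero h.hq1 (h.facA _ (h.nscale _ h.hq1 j))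
  have h1 := qPochInf_split h.hq1 (h.facA _ h.nqb2) j
  have h2 := qPochInf_split h.hq1 (h.facA _ h.hq1) j
  have e1 : fp q (q / b ^ 2) j = qPochInf (q / b ^ 2) q / qPochInf ((q / b ^ 2) * q ^ j) q := by
    rw [fp, h1, mul_div_assoc, div_self hPAj, mul_one]
  have e2 : fp q q j = qPochInf q q / qPochInf (q * q ^ j) q := by
    rw [fp, h2, mul_div_assoc, div_self hPBj, mul_one]
  rw [qc, e1, e2]
  rw [div_div_div_comm]
  rw [div_div_eq_mul_div, div_mul_eq_mul_div, mul_comm (qPochInf ((q / b ^ 2) * q ^ j) q)]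
  rw [div_div]

set_option maxHeartbeats 1000000 in
lemma psi_eval (h : H q b) (hq0 : q ≠ 0) (n : ℕ) :
    psi11 (q ^ (1 + (n:ℤ)) / b ^ 2) (q ^ (1 + (n:ℤ))) q b
      = F q b b * (qc q b n * b ^ n)⁻¹ := by
  have hb0 : b ≠ 0 := h.hb0
  have eA : q ^ (1 + (n:ℤ)) / b ^ 2 = (q / b ^ 2) * q ^ n := by rw [en hq0 n]; ring
  have eB : q ^ (1 + (n:ℤ)) = q * q ^ n := en hq0 n
  have hPA : ∀ j : ℕ, qPochInf ((q / b ^ 2) * q ^ j) q ≠ 0 := fun j =>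
    qPochInf_ne_zero h.hq1 (h.facA _ (h.nscale _ h.nqb2 j))
  have hPB : ∀ j : ℕ, qPochInf (q * q ^ j) q ≠ 0 := fun j =>
    qPochInf_ne_zero h.hq1 (h.facA _ (h.nscale _ h.hq1 j))
  have hzero : ∀ m : ℤ, m + (n:ℤ) < 0 → qPochInt (q * q ^ n) q m = 0 := by
    intro m hm
    have e1 : (q * q ^ n) * q ^ m = q ^ (1 + (n:ℤ) + m) := by
      rw [← en hq0 n, ← zpow_add₀ hq0]
    have hterm : 1 - (q ^ (1 + (n:ℤ) + m)) * q ^ ((-(1 + (n:ℤ) + m)).toNat) = 0 := by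
      rw [← zpow_natCast q ((-(1 + (n:ℤ) + m)).toNat), ← zpow_add₀ hq0,
        show (1 + (n:ℤ) + m) + ((-(1 + (n:ℤ) + m)).toNat : ℤ) = 0 by
          rw [Int.toNat_of_nonneg (by omega)]; ring,
        zpow_zero]
      ring
    have hz : qPochInf ((q * q ^ n) * q ^ m) q = 0 := by
      rw [e1]
      exact tprod_eq_zero _ hterm
    rw [qPochInt, hz, div_zero]
  have eshift : ∀ (z : ℂ) (k : ℕ), (z * q ^ n) * q ^ ((k:ℤ) - (n:ℤ)) = z * q ^ k := by
    intro z k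
    rw [mul_assoc, ← zpow_natCast q n, ← zpow_add₀ hq0,
      show (n:ℤ) + ((k:ℤ) - (n:ℤ)) = (k:ℤ) by ring, zpow_natCast]
  have hgne : ∀ k : ℕ, (qc q b k * b ^ k) * (qc q b n * b ^ n)⁻¹ ≠ 0 := by
    intro k
    exact mul_ne_zero (mul_ne_zero (h.qc_ne k) (pow_ne_zero _ hb0))
      (inv_ne_zero (mul_ne_zero (h.qc_ne n) (pow_ne_zero _ hb0)))
  have hval : ∀ k : ℕ,
      qPochInt ((q / b ^ 2) * q ^ n) q ((k:ℤ) - (n:ℤ))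
        / qPochInt (q * q ^ n) q ((k:ℤ) - (n:ℤ)) * b ^ ((k:ℤ) - (n:ℤ))
      = (qc q b k * b ^ k) * (qc q b n * b ^ n)⁻¹ := by
    intro k
    have hbk : (b:ℂ) ^ k ≠ 0 := pow_ne_zero _ hb0
    have hbn : (b:ℂ) ^ n ≠ 0 := pow_ne_zero _ hb0
    have hPa : qPochInf (q / b ^ 2) q ≠ 0 := qPochInf_ne_zero h.hq1 (h.facA _ h.nqb2)
    have hPq : qPochInf q q ≠ 0 := qPochInf_ne_zero h.hq1 (h.facA _ h.hq1)
    simp only [qPochInt, eshift]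
    rw [h.qc_eq_poch k, h.qc_eq_poch n, zpow_sub₀ hb0, zpow_natCast, zpow_natCast]
    set Pa := qPochInf (q / b ^ 2) q with hPa'
    set Pq := qPochInf q q with hPq'
    set PAn := qPochInf ((q / b ^ 2) * q ^ n) q with hPAn'
    set PAk := qPochInf ((q / b ^ 2) * q ^ k) q with hPAk'
    set PBn := qPochInf (q * q ^ n) q with hPBn'
    set PBk := qPochInf (q * q ^ k) q with hPBk'
    have h1 : PAn ≠ 0 := hPA n
    have h2 : PAk ≠ 0 := hPA k
    have h3 : PBn ≠ 0 := hPB n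
    have h4 : PBk ≠ 0 := hPB k
    field_simp
  rw [eA, eB, psi11]
  have key : (∑' m : ℤ, qPochInt ((q / b ^ 2) * q ^ n) q m / qPochInt (q * q ^ n) q m * b ^ m)
      = ∑' k : ℕ, (qc q b k * b ^ k) * (qc q b n * b ^ n)⁻¹ := by
    refine tsum_eq_tsum_of_ne_zero_bij
      (f := fun m : ℤ => qPochInt ((q / b ^ 2) * q ^ n) q m / qPochInt (q * q ^ n) q m * b ^ m)
      (g := fun k : ℕ => (qc q b k * b ^ k) * (qc q b n * b ^ n)⁻¹)
      (fun x => (x.1 : ℤ) - (n:ℤ)) ?_ ?_ ?_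
    · intro x y hxy
      apply Subtype.ext
      have h2 : ((x.1 : ℤ)) - (n:ℤ) = ((y.1 : ℤ)) - (n:ℤ) := hxy
      have : (x.1 : ℤ) = (y.1 : ℤ) := by omega
      exact_mod_cast this
    · intro m hm
      have hmn : 0 ≤ m + (n:ℤ) := by
        by_contra hc
        push_neg at hc
        apply hm
        show qPochInt ((q / b ^ 2) * q ^ n) q m / qPochInt (q * q ^ n) q m * b ^ m = 0
        rw [hzero m hc, div_zero, zero_mul]
      refine ⟨⟨(m + (n:ℤ)).toNat, hgne _⟩, ?_⟩
      simp only
      rw [Int.toNat_of_nonneg hmn]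
      ring
    · intro x
      exact hval x.1
  rw [key, tsum_mul_right, F]

end H

theorem double_sum_evaluation_Nf1 (q b : ℂ)
    (hq0 : 0 < ‖q‖) (hq1 : ‖q‖ < 1)
    (hb : ‖b‖ < 1) (hqb : ‖q‖ < ‖b‖ ^ 2) :
    (∑' n : ℕ, b ^ (2 * n) *
      (qPochInt (q / b ^ 2) q n ^ 2 * qPochInf (b ^ 2) q) /
      (qPochInt q q n ^ 2 * qPochInf (q / b ^ 2) q) *
      psi11 (q ^ (1 + (n : ℤ)) / b ^ 2) (q ^ (1 + (n : ℤ))) q b)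
    = (qPochInf (b ^ 2) q / qPochInf (q / b ^ 2) q) *
      (qPochInf (q / b) q / qPochInf b q) ^ 2 := by
  have hq0' : q ≠ 0 := by
    intro h0
    rw [h0] at hq0
    simp at hq0
  have hb0 : b ≠ 0 := by
    intro h0
    rw [h0] at hqb
    simp at hqb
    exact absurd hq0 (by simpa using hqb.le.not_gt)
  have h : H q b := ⟨by simpa using hq1,
    by simpa using hb,
    by simpa using hqb, hb0⟩
  have hterm : ∀ n : ℕ,
      b ^ (2 * n) * (qPochInt (q / b ^ 2) q n ^ 2 * qPochInf (b ^ 2) q)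
        / (qPochInt q q n ^ 2 * qPochInf (q / b ^ 2) q)
        * psi11 (q ^ (1 + (n : ℤ)) / b ^ 2) (q ^ (1 + (n : ℤ))) q b
      = (qPochInf (b ^ 2) q / qPochInf (q / b ^ 2) q * F q b b) * (qc q b n * b ^ n) := by
    intro n
    rw [h.psi_eval hq0' n]
    have e1 : qPochInt (q / b ^ 2) q (n:ℤ) = fp q (q / b ^ 2) n :=
      qPochInt_eq_fp h.hq1 (h.facA _ h.nqb2) n
    have e2 : qPochInt q q (n:ℤ) = fp q q n := qPochInt_eq_fp h.hq1 (h.facA _ h.hq1) n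
    rw [e1, e2]
    simp only [qc]
    have hA : fp q (q / b ^ 2) n ≠ 0 := h.fp_ne _ h.nqb2 n
    have hQ : fp q q n ≠ 0 := h.fp_ne _ h.hq1 n
    have hbn : b ^ n ≠ 0 := pow_ne_zero _ hb0
    have hPa : qPochInf (q / b ^ 2) q ≠ 0 := qPochInf_ne_zero h.hq1 (h.facA _ h.nqb2)
    set FA := fp q (q / b ^ 2) n with hFA
    set FQ := fp q q n with hFQ
    set Pb2 := qPochInf (b ^ 2) q with hPb2
    set Pa := qPochInf (q / b ^ 2) q with hPaa
    rw [pow_mul]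
    field_simp
    ring
  rw [tsum_congr hterm, tsum_mul_left, ← F, h.qbinom]
  ring
end
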